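/- Let κ ∈ ℝ and suppose (c₁,c₂) ∈ ℝ × [0,∞) satisfies ∂₁F_κ(c₁,c₂) = 0. Then ∂₂F_κ(c₁,c₂) ≤ inf_{c ∈ ℝ} F₀(c,1), where F₀ is F_κ with κ = 0. -/

import Mathlib

open MeasureTheory ProbabilityTheory Real Filter Set Topology

noncomputable section

namespace MaxMargin

/-- The standard Gaussian measure on `ℝ`. -/
def stdG : Measure ℝ := gaussianReal 0 1

instance : IsProbabilityMeasure stdG := by unfold stdG; infer_instance

/-- The function `F_κ(c₁,c₂) = (E[((κ − c₁·Y·G − c₂·Z)₊)²])^{1/2}` where `G, Z` are independent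
standard Gaussians and, conditionally on `G`, `Y ∈ {+1,−1}` with `P(Y = +1 | G) = f(G)`. -/
def Fk (f : ℝ → ℝ) (κ c₁ c₂ : ℝ) : ℝ :=
  Real.sqrt (∫ g, ∫ z,
    (f g * (max (κ - c₁ * g - c₂ * z) 0) ^ 2
      + (1 - f g) * (max (κ + c₁ * g - c₂ * z) 0) ^ 2) ∂stdG ∂stdG)

/-- Non-degeneracy of `f`: the variable `T = Y·G` satisfies `P(T < x) > 0` and `P(T > x) > 0`
for every `x ∈ ℝ`. -/
def NonDeg (f : ℝ → ℝ) : Prop :=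
  ∀ x : ℝ,
    (0 < ∫ g, (f g * (if g < x then (1:ℝ) else 0)
          + (1 - f g) * (if -g < x then (1:ℝ) else 0)) ∂stdG) ∧
    (0 < ∫ g, (f g * (if x < g then (1:ℝ) else 0)
          + (1 - f g) * (if x < -g then (1:ℝ) else 0)) ∂stdG)

/-- Partial derivative of `F_κ` in its first argument. -/
def d1F (f : ℝ → ℝ) (κ c₁ c₂ : ℝ) : ℝ := deriv (fun t => Fk f κ t c₂) c₁

/-- Partial derivative of `F_κ` in its second argument. -/
def d2F (f : ℝ → ℝ) (κ c₁ c₂ : ℝ) : ℝ := deriv (fun t => Fk f κ c₁ t) c₂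

lemma stdG_map_neg : stdG.map (fun x => -x) = stdG := by
  have h := gaussianReal_map_const_mul (μ := (0:ℝ)) (v := (1:NNReal)) (-1)
  have h2 : (⟨(-1:ℝ)^2, sq_nonneg _⟩ : NNReal) * 1 = 1 := by ext; norm_num
  rw [mul_zero] at h
  simpa only [neg_one_mul, stdG] using h.trans (congrArg (gaussianReal 0) (by ext; norm_num) : gaussianReal 0 _ = gaussianReal 0 1)

lemma continuous_gaussianPDFReal : Continuous (gaussianPDFReal 0 1) := by
  rw [gaussianPDFReal_def]
  fun_prop

lemma integrable_base_stdG : Integrable (fun x : ℝ => 1 + |x| + x ^ 2) stdG := by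
  rw [stdG, gaussianReal_of_var_ne_zero 0 one_ne_zero,
    integrable_withDensity_iff (measurable_gaussianPDF 0 1)
      (ae_of_all _ fun x => ENNReal.ofReal_lt_top)]
  have hpdf : ∀ x : ℝ, ((gaussianPDF 0 1 x).toReal)
      = (√(2 * π))⁻¹ * Real.exp (-(x ^ 2 / 2)) := by
    intro x
    rw [gaussianPDF, ENNReal.toReal_ofReal (gaussianPDFReal_nonneg _ _ _), gaussianPDFReal]
    push_cast
    ring_nf
  refine Integrable.mono' ((integrable_exp_neg_mul_sq (b := 4⁻¹)
      (by norm_num)).const_mul 10) ?_ (ae_of_all _ fun x => ?_)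
  · refine Continuous.aestronglyMeasurable ?_
    have : Continuous fun x : ℝ => (gaussianPDF 0 1 x).toReal := by
      simp only [hpdf]; fun_prop
    fun_prop
  · rw [hpdf]
    have h1 : (1:ℝ) ≤ Real.exp (4⁻¹ * x ^ 2) := by
      rw [← Real.exp_zero]
      exact Real.exp_le_exp.2 (by positivity)
    have h2 : x ^ 2 ≤ 4 * Real.exp (4⁻¹ * x ^ 2) := by
      have := Real.add_one_le_exp (4⁻¹ * x ^ 2)
      nlinarith
    have h3 : |x| ≤ 5 * Real.exp (4⁻¹ * x ^ 2) := by
      nlinarith [sq_nonneg (|x| - 1), sq_abs x]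
    have hc : ((√(2 * π))⁻¹ : ℝ) ≤ 1 := by
      rw [inv_le_one_iff₀]
      right
      rw [show (1:ℝ) = √1 by simp]
      exact Real.sqrt_le_sqrt (by nlinarith [Real.pi_gt_three])
    have hcpos : (0:ℝ) < (√(2 * π))⁻¹ := by positivity
    have hexp : Real.exp (-(x ^ 2 / 2)) * Real.exp (4⁻¹ * x ^ 2)
        = Real.exp (-4⁻¹ * x ^ 2) := by
      rw [← Real.exp_add]; ring_nf
    have hnn : (0:ℝ) ≤ 1 + |x| + x ^ 2 := by positivity
    rw [Real.norm_eq_abs, abs_of_nonneg (by positivity : (0:ℝ) ≤ (1 + |x| + x ^ 2) * ((√(2 * π))⁻¹ * Real.exp (-(x ^ 2 / 2))))]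
    have hb : 1 + |x| + x ^ 2 ≤ 10 * Real.exp (4⁻¹ * x ^ 2) := by linarith
    calc (1 + |x| + x ^ 2) * ((√(2 * π))⁻¹ * Real.exp (-(x ^ 2 / 2)))
        ≤ (1 + |x| + x ^ 2) * (1 * Real.exp (-(x ^ 2 / 2))) := by
          apply mul_le_mul_of_nonneg_left _ hnn
          exact mul_le_mul_of_nonneg_right hc (Real.exp_nonneg _)
      _ = (1 + |x| + x ^ 2) * Real.exp (-(x ^ 2 / 2)) := by ring
      _ ≤ 10 * Real.exp (4⁻¹ * x ^ 2) * Real.exp (-(x ^ 2 / 2)) := by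
          apply mul_le_mul_of_nonneg_right hb (Real.exp_nonneg _)
      _ = 10 * Real.exp (-4⁻¹ * x ^ 2) := by
          rw [mul_assoc, mul_comm (Real.exp _) (Real.exp _), hexp]

lemma integrable_stdG_of_bound {h : ℝ → ℝ} (hm : AEStronglyMeasurable h stdG)
    {C : ℝ} (hb : ∀ x, |h x| ≤ C * (1 + |x| + x ^ 2)) : Integrable h stdG := by
  refine Integrable.mono' (integrable_base_stdG.const_mul C) hm (ae_of_all _ fun x => ?_)
  exact hb x


lemma amgm_eps {u v ε : ℝ} (hε : 0 < ε) :
    (u + v) ^ 2 ≤ (1 + ε) * u ^ 2 + (1 + ε⁻¹) * v ^ 2 := by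
  have h := sq_nonneg (ε * u - v)
  have h3 := mul_nonneg (inv_nonneg.2 hε.le) h
  have hinv : ε * ε⁻¹ = 1 := mul_inv_cancel₀ hε.ne'
  nlinarith [sq_nonneg u, sq_nonneg v, mul_pos hε hε]

lemma sqrt_le_of_forall_eps {S S₁ S₂ : ℝ} (h₁ : 0 ≤ S₁) (h₂ : 0 ≤ S₂)
    (h : ∀ ε : ℝ, 0 < ε → S ≤ (1 + ε) * S₁ + (1 + ε⁻¹) * S₂) :
    Real.sqrt S ≤ Real.sqrt S₁ + Real.sqrt S₂ := by
  have key : S ≤ (Real.sqrt S₁ + Real.sqrt S₂) ^ 2 := by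
    rcases eq_or_lt_of_le h₁ with hS1 | hS1
    · -- S₁ = 0
      have hS : S ≤ S₂ := by
        refine le_of_forall_pos_le_add fun ε hε => ?_
        rcases eq_or_lt_of_le h₂ with hS2 | hS2
        · have := h 1 one_pos
          rw [← hS1, ← hS2] at this
          norm_num at this
          linarith
        · have hh := h (S₂ / ε) (div_pos hS2 hε)
          rw [← hS1, inv_div] at hh
          have hc : ε / S₂ * S₂ = ε := div_mul_cancel₀ ε hS2.ne'
          nlinarith
      calc S ≤ S₂ := hS
        _ = (Real.sqrt S₁ + Real.sqrt S₂) ^ 2 := by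
            rw [← hS1, Real.sqrt_zero, zero_add, Real.sq_sqrt h₂]
    · rcases eq_or_lt_of_le h₂ with hS2 | hS2
      · have hS : S ≤ S₁ := by
          refine le_of_forall_pos_le_add fun ε hε => ?_
          have hh := h (ε / S₁) (div_pos hε hS1)
          rw [← hS2] at hh
          have hc : ε / S₁ * S₁ = ε := div_mul_cancel₀ ε hS1.ne'
          nlinarith
        calc S ≤ S₁ := hS
          _ = (Real.sqrt S₁ + Real.sqrt S₂) ^ 2 := by
            rw [← hS2, Real.sqrt_zero, add_zero, Real.sq_sqrt h₁]
      · have hA : (0:ℝ) < Real.sqrt S₁ := Real.sqrt_pos.2 hS1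
        have hB : (0:ℝ) < Real.sqrt S₂ := Real.sqrt_pos.2 hS2
        have h' := h (Real.sqrt S₂ / Real.sqrt S₁) (div_pos hB hA)
        have e : (1 + Real.sqrt S₂ / Real.sqrt S₁) * S₁
            + (1 + (Real.sqrt S₂ / Real.sqrt S₁)⁻¹) * S₂
            = (Real.sqrt S₁ + Real.sqrt S₂) ^ 2 := by
          rw [inv_div]
          have e1 : Real.sqrt S₁ ^ 2 = S₁ := Real.sq_sqrt h₁
          have e2 : Real.sqrt S₂ ^ 2 = S₂ := Real.sq_sqrt h₂
          field_simp
          nlinarith [e1, e2]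
        linarith [e ▸ h']
  calc Real.sqrt S ≤ Real.sqrt ((Real.sqrt S₁ + Real.sqrt S₂) ^ 2) := Real.sqrt_le_sqrt key
    _ = Real.sqrt S₁ + Real.sqrt S₂ :=
        Real.sqrt_sq (add_nonneg (Real.sqrt_nonneg _) (Real.sqrt_nonneg _))


/-- The double-integral integrand. -/
def itg (f : ℝ → ℝ) (κ a b : ℝ) (g z : ℝ) : ℝ :=
  f g * (max (κ - a * g - b * z) 0) ^ 2 + (1 - f g) * (max (κ + a * g - b * z) 0) ^ 2

def II (f : ℝ → ℝ) (κ a b : ℝ) : ℝ := ∫ g, (∫ z, itg f κ a b g z ∂stdG) ∂stdG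

def Kb : ℝ := ∫ z, (1 + |z| + z ^ 2) ∂stdG

section withf
variable {f : ℝ → ℝ}

lemma itg_cont (hf : Continuous f) (κ a b : ℝ) : Continuous fun p : ℝ × ℝ => itg f κ a b p.1 p.2 := by
  unfold itg; fun_prop

lemma itg_nonneg (hf01 : ∀ x, f x ∈ Set.Icc (0:ℝ) 1) (κ a b : ℝ) (g z : ℝ) : 0 ≤ itg f κ a b g z := by
  have h1 := (hf01 g).1; have h2 := (hf01 g).2
  unfold itg
  have h3 : (0:ℝ) ≤ 1 - f g := by linarith
  have h4 : (0:ℝ) ≤ (max (κ - a * g - b * z) 0) ^ 2 := by positivity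
  have h5 : (0:ℝ) ≤ (max (κ + a * g - b * z) 0) ^ 2 := by positivity
  exact add_nonneg (mul_nonneg h1 h4) (mul_nonneg h3 h5)

lemma itg_le (hf01 : ∀ x, f x ∈ Set.Icc (0:ℝ) 1) (κ a b : ℝ) (g z : ℝ) :
    itg f κ a b g z ≤ 6 * (κ ^ 2 + a ^ 2 + b ^ 2) * ((1 + |g| + g ^ 2) * (1 + |z| + z ^ 2)) := by
  have h1 := (hf01 g).1; have h2 := (hf01 g).2
  have hu : (max (κ - a * g - b * z) 0) ^ 2 ≤ (κ - a * g - b * z) ^ 2 := by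
    rw [← sq_abs (κ - a * g - b * z)]
    apply pow_le_pow_left₀ (le_max_right _ _) (max_le (le_abs_self _) (abs_nonneg _))
  have hv : (max (κ + a * g - b * z) 0) ^ 2 ≤ (κ + a * g - b * z) ^ 2 := by
    rw [← sq_abs (κ + a * g - b * z)]
    apply pow_le_pow_left₀ (le_max_right _ _) (max_le (le_abs_self _) (abs_nonneg _))
  have hitg : itg f κ a b g z ≤ (κ - a * g - b * z) ^ 2 + (κ + a * g - b * z) ^ 2 := by
    unfold itg
    have hun : (0:ℝ) ≤ (max (κ - a * g - b * z) 0) ^ 2 := by positivity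
    have hvn : (0:ℝ) ≤ (max (κ + a * g - b * z) 0) ^ 2 := by positivity
    nlinarith
  have hsq : (κ - a * g - b * z) ^ 2 + (κ + a * g - b * z) ^ 2
      ≤ 6 * (κ ^ 2 + a ^ 2 * g ^ 2 + b ^ 2 * z ^ 2) := by nlinarith [sq_nonneg (κ - b*z), sq_nonneg (a*g), sq_nonneg (κ + a*g), sq_nonneg (b*z), sq_nonneg (κ - a*g), sq_nonneg (κ+b*z)]
  have hfin : 6 * (κ ^ 2 + a ^ 2 * g ^ 2 + b ^ 2 * z ^ 2)
      ≤ 6 * (κ ^ 2 + a ^ 2 + b ^ 2) * ((1 + |g| + g ^ 2) * (1 + |z| + z ^ 2)) := by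
    have hg : (0:ℝ) ≤ |g| := abs_nonneg g
    have hz : (0:ℝ) ≤ |z| := abs_nonneg z
    have hg2 : g ^ 2 = |g| ^ 2 := (sq_abs g).symm
    have hz2 : z ^ 2 = |z| ^ 2 := (sq_abs z).symm
    rw [hg2, hz2]
    set G := |g| with hG
    set Z := |z| with hZ
    have e1 : (1:ℝ) ≤ 1 + G + G ^ 2 := by nlinarith
    have e2 : (1:ℝ) ≤ 1 + Z + Z ^ 2 := by nlinarith
    have hGnn : (0:ℝ) ≤ G := abs_nonneg g
    have hZnn : (0:ℝ) ≤ Z := abs_nonneg z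
    have hP1 : (1:ℝ) ≤ (1 + G + G ^ 2) * (1 + Z + Z ^ 2) :=
      le_trans e1 (le_mul_of_one_le_right (by positivity) e2)
    have hPG : G ^ 2 ≤ (1 + G + G ^ 2) * (1 + Z + Z ^ 2) :=
      le_trans (by nlinarith) (le_mul_of_one_le_right (by positivity) e2)
    have hPZ : Z ^ 2 ≤ (1 + G + G ^ 2) * (1 + Z + Z ^ 2) :=
      le_trans (by nlinarith) (le_mul_of_one_le_left (by positivity) e1)
    have t1 : κ ^ 2 ≤ κ ^ 2 * ((1 + G + G ^ 2) * (1 + Z + Z ^ 2)) :=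
      le_mul_of_one_le_right (sq_nonneg κ) hP1
    have t2 : a ^ 2 * G ^ 2 ≤ a ^ 2 * ((1 + G + G ^ 2) * (1 + Z + Z ^ 2)) :=
      mul_le_mul_of_nonneg_left hPG (sq_nonneg a)
    have t3 : b ^ 2 * Z ^ 2 ≤ b ^ 2 * ((1 + G + G ^ 2) * (1 + Z + Z ^ 2)) :=
      mul_le_mul_of_nonneg_left hPZ (sq_nonneg b)
    calc 6 * (κ ^ 2 + a ^ 2 * G ^ 2 + b ^ 2 * Z ^ 2)
        ≤ 6 * (κ ^ 2 * ((1 + G + G ^ 2) * (1 + Z + Z ^ 2))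
            + a ^ 2 * ((1 + G + G ^ 2) * (1 + Z + Z ^ 2))
            + b ^ 2 * ((1 + G + G ^ 2) * (1 + Z + Z ^ 2))) := by linarith
      _ = 6 * (κ ^ 2 + a ^ 2 + b ^ 2) * ((1 + G + G ^ 2) * (1 + Z + Z ^ 2)) := by ring
  linarith

lemma itg_int_inner (hf : Continuous f) (hf01 : ∀ x, f x ∈ Set.Icc (0:ℝ) 1) (κ a b : ℝ) (g : ℝ) : Integrable (itg f κ a b g) stdG := by
  have hcont : Continuous (itg f κ a b g) := by unfold itg; fun_prop
  refine integrable_stdG_of_bound hcont.aestronglyMeasurable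
    (C := 6 * (κ ^ 2 + a ^ 2 + b ^ 2) * (1 + |g| + g ^ 2)) (fun z => ?_)
  rw [abs_of_nonneg (itg_nonneg hf01 κ a b g z)]
  exact le_trans (itg_le hf01 κ a b g z) (le_of_eq (mul_assoc _ _ _).symm)
    

end withf

lemma Kb_def_nonneg : 0 ≤ Kb := integral_nonneg fun z => by positivity

lemma one_le_Kb : 1 ≤ Kb := by
  have h : ∫ (_ : ℝ), (1:ℝ) ∂stdG ≤ ∫ z, (1 + |z| + z ^ 2) ∂stdG := by
    refine integral_mono (integrable_const 1) integrable_base_stdG (fun z => ?_)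
    show (1:ℝ) ≤ 1 + |z| + z ^ 2
    nlinarith [abs_nonneg z, sq_nonneg z]
  simpa [Kb] using h

section withf
variable {f : ℝ → ℝ}

lemma inner_nonneg (hf01 : ∀ x, f x ∈ Set.Icc (0:ℝ) 1) (κ a b : ℝ) (g : ℝ) :
    0 ≤ ∫ z, itg f κ a b g z ∂stdG :=
  integral_nonneg fun z => itg_nonneg hf01 κ a b g z

lemma inner_le (hf : Continuous f) (hf01 : ∀ x, f x ∈ Set.Icc (0:ℝ) 1) (κ a b : ℝ) (g : ℝ) :
    ∫ z, itg f κ a b g z ∂stdG ≤ 6 * (κ ^ 2 + a ^ 2 + b ^ 2) * (1 + |g| + g ^ 2) * Kb := by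
  have h := integral_mono (itg_int_inner hf hf01 κ a b g)
    (integrable_base_stdG.const_mul (6 * (κ ^ 2 + a ^ 2 + b ^ 2) * (1 + |g| + g ^ 2)))
    (fun z => le_trans (itg_le hf01 κ a b g z) (le_of_eq (mul_assoc _ _ _).symm))
  rwa [integral_const_mul] at h

lemma asm_inner (hf : Continuous f) (κ a b : ℝ) :
    AEStronglyMeasurable (fun g => ∫ z, itg f κ a b g z ∂stdG) stdG :=
  (StronglyMeasurable.integral_prod_right' (f := fun p : ℝ × ℝ => itg f κ a b p.1 p.2)
    (itg_cont hf κ a b).stronglyMeasurable).aestronglyMeasurable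

lemma itg_int_outer (hf : Continuous f) (hf01 : ∀ x, f x ∈ Set.Icc (0:ℝ) 1) (κ a b : ℝ) :
    Integrable (fun g => ∫ z, itg f κ a b g z ∂stdG) stdG := by
  refine integrable_stdG_of_bound (asm_inner hf κ a b)
    (C := 6 * (κ ^ 2 + a ^ 2 + b ^ 2) * Kb) (fun g => ?_)
  rw [abs_of_nonneg (inner_nonneg hf01 κ a b g)]
  calc ∫ z, itg f κ a b g z ∂stdG
      ≤ 6 * (κ ^ 2 + a ^ 2 + b ^ 2) * (1 + |g| + g ^ 2) * Kb := inner_le hf hf01 κ a b g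
    _ = 6 * (κ ^ 2 + a ^ 2 + b ^ 2) * Kb * (1 + |g| + g ^ 2) := by ring

lemma II_nonneg (hf01 : ∀ x, f x ∈ Set.Icc (0:ℝ) 1) (κ a b : ℝ) : 0 ≤ II f κ a b :=
  integral_nonneg fun g => inner_nonneg hf01 κ a b g

lemma itg_add_le (hf01 : ∀ x, f x ∈ Set.Icc (0:ℝ) 1) {ε : ℝ} (hε : 0 < ε)
    (κ a b κ' a' b' : ℝ) (g z : ℝ) :
    itg f (κ + κ') (a + a') (b + b') g z
      ≤ (1 + ε) * itg f κ a b g z + (1 + ε⁻¹) * itg f κ' a' b' g z := by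
  have h1 := (hf01 g).1; have h2 := (hf01 g).2
  set u := max (κ - a * g - b * z) 0 with hu
  set u' := max (κ' - a' * g - b' * z) 0 with hu'
  set v := max (κ + a * g - b * z) 0 with hv
  set v' := max (κ' + a' * g - b' * z) 0 with hv'
  have hun : 0 ≤ u := le_max_right _ _
  have hun' : 0 ≤ u' := le_max_right _ _
  have hvn : 0 ≤ v := le_max_right _ _
  have hvn' : 0 ≤ v' := le_max_right _ _
  have key1 : (max (κ + κ' - (a + a') * g - (b + b') * z) 0) ^ 2 ≤ (u + u') ^ 2 := by
    apply pow_le_pow_left₀ (le_max_right _ _)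
    apply max_le _ (by positivity)
    calc κ + κ' - (a + a') * g - (b + b') * z
        = (κ - a * g - b * z) + (κ' - a' * g - b' * z) := by ring
      _ ≤ u + u' := add_le_add (le_max_left _ _) (le_max_left _ _)
  have key2 : (max (κ + κ' + (a + a') * g - (b + b') * z) 0) ^ 2 ≤ (v + v') ^ 2 := by
    apply pow_le_pow_left₀ (le_max_right _ _)
    apply max_le _ (by positivity)
    calc κ + κ' + (a + a') * g - (b + b') * z
        = (κ + a * g - b * z) + (κ' + a' * g - b' * z) := by ring
      _ ≤ v + v' := add_le_add (le_max_left _ _) (le_max_left _ _)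
  have am1 : (u + u') ^ 2 ≤ (1 + ε) * u ^ 2 + (1 + ε⁻¹) * u' ^ 2 := amgm_eps hε
  have am2 : (v + v') ^ 2 ≤ (1 + ε) * v ^ 2 + (1 + ε⁻¹) * v' ^ 2 := amgm_eps hε
  have w1 : f g * (max (κ + κ' - (a + a') * g - (b + b') * z) 0) ^ 2
      ≤ f g * ((1 + ε) * u ^ 2 + (1 + ε⁻¹) * u' ^ 2) :=
    mul_le_mul_of_nonneg_left (le_trans key1 am1) h1
  have w2 : (1 - f g) * (max (κ + κ' + (a + a') * g - (b + b') * z) 0) ^ 2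
      ≤ (1 - f g) * ((1 + ε) * v ^ 2 + (1 + ε⁻¹) * v' ^ 2) :=
    mul_le_mul_of_nonneg_left (le_trans key2 am2) (by linarith)
  unfold itg
  rw [← hu, ← hu', ← hv, ← hv']
  nlinarith [w1, w2]

lemma II_add_le (hf : Continuous f) (hf01 : ∀ x, f x ∈ Set.Icc (0:ℝ) 1) {ε : ℝ} (hε : 0 < ε)
    (κ a b κ' a' b' : ℝ) :
    II f (κ + κ') (a + a') (b + b')
      ≤ (1 + ε) * II f κ a b + (1 + ε⁻¹) * II f κ' a' b' := by
  have inner_step : ∀ g, ∫ z, itg f (κ + κ') (a + a') (b + b') g z ∂stdG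
      ≤ (1 + ε) * (∫ z, itg f κ a b g z ∂stdG) + (1 + ε⁻¹) * (∫ z, itg f κ' a' b' g z ∂stdG) := by
    intro g
    have h := integral_mono (itg_int_inner hf hf01 _ _ _ g)
      (((itg_int_inner hf hf01 κ a b g).const_mul (1 + ε)).add
        ((itg_int_inner hf hf01 κ' a' b' g).const_mul (1 + ε⁻¹)))
      (fun z => itg_add_le hf01 hε κ a b κ' a' b' g z)
    simp only [Pi.add_apply] at h
    rwa [integral_add ((itg_int_inner hf hf01 κ a b g).const_mul _)
      ((itg_int_inner hf hf01 κ' a' b' g).const_mul _),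
      integral_const_mul, integral_const_mul] at h
  have h := integral_mono (itg_int_outer hf hf01 (κ + κ') (a + a') (b + b'))
    (((itg_int_outer hf hf01 κ a b).const_mul (1 + ε)).add
      ((itg_int_outer hf hf01 κ' a' b').const_mul (1 + ε⁻¹))) inner_step
  simp only [Pi.add_apply] at h
  unfold II
  rwa [integral_add ((itg_int_outer hf hf01 κ a b).const_mul _)
    ((itg_int_outer hf hf01 κ' a' b').const_mul _),
    integral_const_mul, integral_const_mul] at h

lemma Fk_eq_sqrt_II (κ a b : ℝ) : Fk f κ a b = Real.sqrt (II f κ a b) := rfl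

lemma Fk_nonneg (κ a b : ℝ) : 0 ≤ Fk f κ a b := Real.sqrt_nonneg _

lemma Fk_subadd (hf : Continuous f) (hf01 : ∀ x, f x ∈ Set.Icc (0:ℝ) 1) (κ a b κ' a' b' : ℝ) :
    Fk f (κ + κ') (a + a') (b + b') ≤ Fk f κ a b + Fk f κ' a' b' := by
  rw [Fk_eq_sqrt_II, Fk_eq_sqrt_II, Fk_eq_sqrt_II]
  exact sqrt_le_of_forall_eps (II_nonneg hf01 κ a b) (II_nonneg hf01 κ' a' b')
    (fun ε hε => II_add_le hf hf01 hε κ a b κ' a' b')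

lemma itg_scale {l : ℝ} (hl : 0 ≤ l) (κ a b : ℝ) (g z : ℝ) :
    itg f (l * κ) (l * a) (l * b) g z = l ^ 2 * itg f κ a b g z := by
  unfold itg
  have h1 : l * κ - l * a * g - l * b * z = l * (κ - a * g - b * z) := by ring
  have h2 : l * κ + l * a * g - l * b * z = l * (κ + a * g - b * z) := by ring
  have key : ∀ w : ℝ, max (l * w) 0 = l * max w 0 := fun w => by
    rcases le_total w 0 with h | h
    · rw [max_eq_right h, max_eq_right (mul_nonpos_iff.2 (Or.inl ⟨hl, h⟩)), mul_zero]
    · rw [max_eq_left h, max_eq_left (mul_nonneg hl h)]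
  rw [h1, h2, key, key]
  ring

lemma Fk_scale (hf : Continuous f) {l : ℝ} (hl : 0 ≤ l) (κ a b : ℝ) :
    Fk f (l * κ) (l * a) (l * b) = l * Fk f κ a b := by
  rw [Fk_eq_sqrt_II, Fk_eq_sqrt_II]
  have hII : II f (l * κ) (l * a) (l * b) = l ^ 2 * II f κ a b := by
    unfold II
    rw [← integral_const_mul]
    apply integral_congr_ae
    filter_upwards with g
    rw [← integral_const_mul]
    apply integral_congr_ae
    filter_upwards with z
    exact itg_scale hl κ a b g z
  rw [hII, Real.sqrt_mul (sq_nonneg l), Real.sqrt_sq hl]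

end withf


lemma hasDerivAt_max_sq (x : ℝ) : HasDerivAt (fun y : ℝ => (max y 0) ^ 2) (2 * max x 0) x := by
  rw [hasDerivAt_iff_tendsto_slope]
  have hb : ∀ y : ℝ, y ≠ x → |slope (fun y : ℝ => (max y 0) ^ 2) x y - 2 * max x 0| ≤ |y - x| := by
    intro y hyx
    have hd : y - x ≠ 0 := sub_ne_zero.2 hyx
    rw [slope_def_field]
    have hnum : |(max y 0) ^ 2 - (max x 0) ^ 2 - (y - x) * (2 * max x 0)| ≤ (y - x) ^ 2 := by
      rcases le_total y 0 with hy | hy <;> rcases le_total x 0 with hx | hx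
      · rw [max_eq_right hy, max_eq_right hx]; simp [sq_nonneg]
      · rw [max_eq_right hy, max_eq_left hx]
        rw [abs_le]; constructor <;> nlinarith
      · rw [max_eq_left hy, max_eq_right hx]
        rw [abs_le]; constructor <;> nlinarith
      · rw [max_eq_left hy, max_eq_left hx]
        rw [abs_le]; constructor <;> nlinarith
    have : ((max y 0) ^ 2 - (max x 0) ^ 2) / (y - x) - 2 * max x 0
        = ((max y 0) ^ 2 - (max x 0) ^ 2 - (y - x) * (2 * max x 0)) / (y - x) := by
      field_simp
    rw [this, abs_div]
    rw [div_le_iff₀ (abs_pos.2 hd)]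
    calc |(max y 0) ^ 2 - (max x 0) ^ 2 - (y - x) * (2 * max x 0)| ≤ (y - x) ^ 2 := hnum
      _ = |y - x| * |y - x| := by rw [← sq_abs, sq]
  have h0 : Tendsto (fun y : ℝ => |y - x|) (𝓝[≠] x) (𝓝 0) := by
    have : Tendsto (fun y : ℝ => |y - x|) (𝓝 x) (𝓝 |x - x|) :=
      ((continuous_id.sub continuous_const).abs.tendsto x)
    simpa using this.mono_left nhdsWithin_le_nhds
  rw [← tendsto_sub_nhds_zero_iff]
  refine squeeze_zero_norm' ?_ h0
  filter_upwards [eventually_mem_nhdsWithin] with y hy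
  exact hb y hy

section withf
variable {f : ℝ → ℝ}

/-- t-derivative of `itg f κ t b g z`. -/
def itgd (f : ℝ → ℝ) (κ b t g z : ℝ) : ℝ :=
  f g * (2 * max (κ - t * g - b * z) 0) * (-g)
    + (1 - f g) * (2 * max (κ + t * g - b * z) 0) * g

lemma itg_hasDerivAt (κ b g z t : ℝ) :
    HasDerivAt (fun t => itg f κ t b g z) (itgd f κ b t g z) t := by
  have ha : HasDerivAt (fun t : ℝ => κ - t * g - b * z) (-g) t := by
    simpa using ((hasDerivAt_mul_const (x := t) g).const_sub κ).sub_const (b * z)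
  have hb : HasDerivAt (fun t : ℝ => κ + t * g - b * z) g t := by
    simpa using ((hasDerivAt_mul_const (x := t) g).const_add κ).sub_const (b * z)
  have h1 : HasDerivAt (fun t => (max (κ - t * g - b * z) 0) ^ 2)
      (2 * max (κ - t * g - b * z) 0 * (-g)) t :=
    (hasDerivAt_max_sq (κ - t * g - b * z)).comp (h₂ := fun y : ℝ => (max y 0) ^ 2) t ha
  have h2 : HasDerivAt (fun t => (max (κ + t * g - b * z) 0) ^ 2)
      (2 * max (κ + t * g - b * z) 0 * g) t :=
    (hasDerivAt_max_sq (κ + t * g - b * z)).comp (h₂ := fun y : ℝ => (max y 0) ^ 2) t hb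
  have := (h1.const_mul (f g)).add (h2.const_mul (1 - f g))
  unfold itg itgd
  exact this.congr_deriv (by ring)

lemma itgd_abs_le (hf01 : ∀ x, f x ∈ Set.Icc (0:ℝ) 1) (κ b t g z : ℝ) :
    |itgd f κ b t g z| ≤ 4 * |g| * (|κ| + |t| * |g| + |b|) * (1 + |z| + z ^ 2) := by
  have h1 := (hf01 g).1; have h2 := (hf01 g).2
  have hu : max (κ - t * g - b * z) 0 ≤ |κ| + |t| * |g| + |b| * |z| := by
    apply max_le _ (by positivity)
    calc κ - t * g - b * z ≤ |κ - t * g - b * z| := le_abs_self _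
      _ ≤ |κ| + |t * g| + |b * z| := by
          refine le_trans (abs_sub _ _) (add_le_add_left (abs_sub _ _) _)
      _ = |κ| + |t| * |g| + |b| * |z| := by rw [abs_mul, abs_mul]
  have hv : max (κ + t * g - b * z) 0 ≤ |κ| + |t| * |g| + |b| * |z| := by
    apply max_le _ (by positivity)
    calc κ + t * g - b * z ≤ |κ + t * g - b * z| := le_abs_self _
      _ ≤ |κ + t * g| + |b * z| := abs_sub _ _
      _ ≤ |κ| + |t * g| + |b * z| := add_le_add_left (abs_add_le _ _) _
      _ = |κ| + |t| * |g| + |b| * |z| := by rw [abs_mul, abs_mul]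
  have hun : (0:ℝ) ≤ max (κ - t * g - b * z) 0 := le_max_right _ _
  have hvn : (0:ℝ) ≤ max (κ + t * g - b * z) 0 := le_max_right _ _
  have step1 : |itgd f κ b t g z|
      ≤ 4 * |g| * (|κ| + |t| * |g| + |b| * |z|) := by
    unfold itgd
    have e1 : |f g * (2 * max (κ - t * g - b * z) 0) * (-g)|
        ≤ 2 * |g| * (|κ| + |t| * |g| + |b| * |z|) := by
      rw [abs_mul, abs_mul, abs_neg, abs_of_nonneg (by positivity : (0:ℝ) ≤ 2 * max (κ - t * g - b * z) 0), abs_of_nonneg h1]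
      have : f g * (2 * max (κ - t * g - b * z) 0) ≤ 1 * (2 * (|κ| + |t| * |g| + |b| * |z|)) := by
        apply mul_le_mul h2 (by linarith) (by positivity) zero_le_one
      calc f g * (2 * max (κ - t * g - b * z) 0) * |g|
          ≤ 1 * (2 * (|κ| + |t| * |g| + |b| * |z|)) * |g| :=
            mul_le_mul_of_nonneg_right this (abs_nonneg g)
        _ = 2 * |g| * (|κ| + |t| * |g| + |b| * |z|) := by ring
    have e2 : |(1 - f g) * (2 * max (κ + t * g - b * z) 0) * g|
        ≤ 2 * |g| * (|κ| + |t| * |g| + |b| * |z|) := by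
      rw [abs_mul, abs_mul, abs_of_nonneg (by positivity : (0:ℝ) ≤ 2 * max (κ + t * g - b * z) 0), abs_of_nonneg (by linarith : (0:ℝ) ≤ 1 - f g)]
      have : (1 - f g) * (2 * max (κ + t * g - b * z) 0) ≤ 1 * (2 * (|κ| + |t| * |g| + |b| * |z|)) := by
        apply mul_le_mul (by linarith) (by linarith) (by positivity) zero_le_one
      calc (1 - f g) * (2 * max (κ + t * g - b * z) 0) * |g|
          ≤ 1 * (2 * (|κ| + |t| * |g| + |b| * |z|)) * |g| :=
            mul_le_mul_of_nonneg_right this (abs_nonneg g)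
        _ = 2 * |g| * (|κ| + |t| * |g| + |b| * |z|) := by ring
    refine le_trans (le_trans (abs_add_le _ _) (add_le_add e1 e2)) (le_of_eq (by ring))
  refine le_trans step1 ?_
  have hzb : |κ| + |t| * |g| + |b| * |z| ≤ (|κ| + |t| * |g| + |b|) * (1 + |z| + z ^ 2) := by
    have hA : (0:ℝ) ≤ |κ| + |t| * |g| := by positivity
    have hz1 : (1:ℝ) ≤ 1 + |z| + z ^ 2 := by nlinarith [abs_nonneg z, sq_nonneg z]
    have hz2 : |z| ≤ 1 + |z| + z ^ 2 := by nlinarith [abs_nonneg z, sq_nonneg z]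
    calc |κ| + |t| * |g| + |b| * |z|
        ≤ (|κ| + |t| * |g|) * (1 + |z| + z ^ 2) + |b| * (1 + |z| + z ^ 2) := by
          refine add_le_add (le_mul_of_one_le_right hA hz1)
            (mul_le_mul_of_nonneg_left hz2 (abs_nonneg b))
      _ = (|κ| + |t| * |g| + |b|) * (1 + |z| + z ^ 2) := by ring
  calc 4 * |g| * (|κ| + |t| * |g| + |b| * |z|)
      ≤ 4 * |g| * ((|κ| + |t| * |g| + |b|) * (1 + |z| + z ^ 2)) :=
        mul_le_mul_of_nonneg_left hzb (by positivity)
    _ = 4 * |g| * (|κ| + |t| * |g| + |b|) * (1 + |z| + z ^ 2) := by ring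

lemma itgd_cont (hf : Continuous f) (κ b t : ℝ) :
    Continuous fun p : ℝ × ℝ => itgd f κ b t p.1 p.2 := by
  unfold itgd; fun_prop

lemma itgd_int_inner (hf : Continuous f) (hf01 : ∀ x, f x ∈ Set.Icc (0:ℝ) 1) (κ b t g : ℝ) :
    Integrable (fun z => itgd f κ b t g z) stdG := by
  have hcont : Continuous (fun z => itgd f κ b t g z) := by unfold itgd; fun_prop
  exact integrable_stdG_of_bound hcont.aestronglyMeasurable
    (C := 4 * |g| * (|κ| + |t| * |g| + |b|)) (fun z => itgd_abs_le hf01 κ b t g z)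

lemma inner_hasDerivAt (hf : Continuous f) (hf01 : ∀ x, f x ∈ Set.Icc (0:ℝ) 1) (κ b g t₀ : ℝ) :
    HasDerivAt (fun t => ∫ z, itg f κ t b g z ∂stdG) (∫ z, itgd f κ b t₀ g z ∂stdG) t₀ := by
  have hcont : ∀ t, Continuous (itg f κ t b g) := fun t => by unfold itg; fun_prop
  refine (hasDerivAt_integral_of_dominated_loc_of_deriv_le (s := Metric.ball _ 1) (Metric.ball_mem_nhds _ one_pos)
    (F := fun t z => itg f κ t b g z) (F' := fun t z => itgd f κ b t g z)
    (bound := fun z => 4 * |g| * (|κ| + (|t₀| + 1) * |g| + |b|) * (1 + |z| + z ^ 2))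
    (Eventually.of_forall fun t => (hcont t).aestronglyMeasurable)
    (itg_int_inner hf hf01 κ t₀ b g)
    ?_ ?_ ?_ ?_).2
  · have : Continuous (fun z => itgd f κ b t₀ g z) := by unfold itgd; fun_prop
    exact this.aestronglyMeasurable
  · refine Eventually.of_forall fun z t ht => ?_
    have h1 : |t| ≤ |t₀| + 1 := by
      have := abs_sub_abs_le_abs_sub t t₀
      have h2 : |t - t₀| < 1 := by simpa [Real.dist_eq] using ht
      linarith
    have hmono : |κ| + |t| * |g| + |b| ≤ |κ| + (|t₀| + 1) * |g| + |b| := by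
      have := mul_le_mul_of_nonneg_right h1 (abs_nonneg g)
      linarith
    have h3 : (0:ℝ) ≤ 1 + |z| + z ^ 2 := by positivity
    have h4 := mul_le_mul_of_nonneg_left hmono (by positivity : (0:ℝ) ≤ 4 * |g|)
    rw [Real.norm_eq_abs]
    exact le_trans (itgd_abs_le hf01 κ b t g z) (mul_le_mul_of_nonneg_right h4 h3)
  · exact integrable_base_stdG.const_mul _
  · exact Eventually.of_forall fun z t _ => itg_hasDerivAt κ b g z t

end withf


section withf2
variable {f : ℝ → ℝ}

lemma asm_inner_d (hf : Continuous f) (κ b t : ℝ) :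
    AEStronglyMeasurable (fun g => ∫ z, itgd f κ b t g z ∂stdG) stdG :=
  (StronglyMeasurable.integral_prod_right' (f := fun p : ℝ × ℝ => itgd f κ b t p.1 p.2)
    (itgd_cont hf κ b t).stronglyMeasurable).aestronglyMeasurable

lemma inner_d_abs_le (hf : Continuous f) (hf01 : ∀ x, f x ∈ Set.Icc (0:ℝ) 1) (κ b t g : ℝ) :
    |∫ z, itgd f κ b t g z ∂stdG| ≤ 4 * |g| * (|κ| + |t| * |g| + |b|) * Kb := by
  have h0 : |∫ z, itgd f κ b t g z ∂stdG| ≤ ∫ z, |itgd f κ b t g z| ∂stdG := by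
    simpa [Real.norm_eq_abs] using
      norm_integral_le_integral_norm (μ := stdG) (fun z => itgd f κ b t g z)
  refine le_trans h0 ?_
  have h := integral_mono (itgd_int_inner hf hf01 κ b t g).abs
    (integrable_base_stdG.const_mul (4 * |g| * (|κ| + |t| * |g| + |b|)))
    (fun z => itgd_abs_le hf01 κ b t g z)
  rwa [integral_const_mul] at h

lemma II_hasDerivAt (hf : Continuous f) (hf01 : ∀ x, f x ∈ Set.Icc (0:ℝ) 1) (κ b c₁ : ℝ) :
    HasDerivAt (fun t => II f κ t b) (∫ g, ∫ z, itgd f κ b c₁ g z ∂stdG ∂stdG) c₁ := by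
  refine (hasDerivAt_integral_of_dominated_loc_of_deriv_le (s := Metric.ball _ 1) (Metric.ball_mem_nhds _ one_pos)
    (F := fun t g => ∫ z, itg f κ t b g z ∂stdG) (F' := fun t g => ∫ z, itgd f κ b t g z ∂stdG)
    (bound := fun g => 4 * |g| * (|κ| + (|c₁| + 1) * |g| + |b|) * Kb)
    (Eventually.of_forall fun t => asm_inner hf κ t b)
    (itg_int_outer hf hf01 κ c₁ b) (asm_inner_d hf κ b c₁) ?_ ?_ ?_).2
  · refine Eventually.of_forall fun g t ht => ?_
    have h1 : |t| ≤ |c₁| + 1 := by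
      have := abs_sub_abs_le_abs_sub t c₁
      have h2 : |t - c₁| < 1 := by simpa [Real.dist_eq] using ht
      linarith
    have hmono : |κ| + |t| * |g| + |b| ≤ |κ| + (|c₁| + 1) * |g| + |b| := by
      have := mul_le_mul_of_nonneg_right h1 (abs_nonneg g)
      linarith
    have h4 := mul_le_mul_of_nonneg_left hmono (by positivity : (0:ℝ) ≤ 4 * |g|)
    rw [Real.norm_eq_abs]
    exact le_trans (inner_d_abs_le hf hf01 κ b t g)
      (mul_le_mul_of_nonneg_right h4 Kb_def_nonneg)
  · have hcont : Continuous fun g : ℝ => 4 * |g| * (|κ| + (|c₁| + 1) * |g| + |b|) * Kb := by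
      fun_prop
    refine integrable_stdG_of_bound hcont.aestronglyMeasurable
      (C := 4 * (|κ| + (|c₁| + 1) + |b|) * Kb) (fun g => ?_)
    have hKb : (0:ℝ) ≤ Kb := Kb_def_nonneg
    have hnn : (0:ℝ) ≤ 4 * |g| * (|κ| + (|c₁| + 1) * |g| + |b|) * Kb := by positivity
    rw [abs_of_nonneg hnn]
    have hgg : |g| * |g| = g ^ 2 := by rw [← sq_abs]; ring
    have t1 : |κ| * |g| ≤ |κ| * (1 + |g| + g ^ 2) :=
      mul_le_mul_of_nonneg_left (by nlinarith [abs_nonneg g, sq_nonneg g]) (abs_nonneg κ)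
    have t2 : (|c₁| + 1) * (|g| * |g|) ≤ (|c₁| + 1) * (1 + |g| + g ^ 2) := by
      rw [hgg]
      exact mul_le_mul_of_nonneg_left (by nlinarith [abs_nonneg g, sq_nonneg g])
        (by positivity)
    have t3 : |b| * |g| ≤ |b| * (1 + |g| + g ^ 2) :=
      mul_le_mul_of_nonneg_left (by nlinarith [abs_nonneg g, sq_nonneg g]) (abs_nonneg b)
    calc 4 * |g| * (|κ| + (|c₁| + 1) * |g| + |b|) * Kb
        = 4 * Kb * (|κ| * |g| + (|c₁| + 1) * (|g| * |g|) + |b| * |g|) := by ring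
      _ ≤ 4 * Kb * (|κ| * (1 + |g| + g ^ 2) + (|c₁| + 1) * (1 + |g| + g ^ 2)
            + |b| * (1 + |g| + g ^ 2)) := by
          refine mul_le_mul_of_nonneg_left ?_ (by positivity)
          linarith
      _ = 4 * (|κ| + (|c₁| + 1) + |b|) * Kb * (1 + |g| + g ^ 2) := by ring
  · exact Eventually.of_forall fun g t _ => inner_hasDerivAt hf hf01 κ b g t

lemma Fk_differentiable_left (hf : Continuous f) (hf01 : ∀ x, f x ∈ Set.Icc (0:ℝ) 1)
    (κ b c₁ : ℝ) (hpos : 0 < II f κ c₁ b) :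
    DifferentiableAt ℝ (fun t => Fk f κ t b) c₁ := by
  have hII := II_hasDerivAt hf hf01 κ b c₁
  have hs := Real.hasDerivAt_sqrt hpos.ne'
  have := hs.comp c₁ hII
  have he : (fun t => Fk f κ t b) = (fun t => Real.sqrt (II f κ t b)) := by
    funext t; exact Fk_eq_sqrt_II κ t b
  rw [he]
  exact this.differentiableAt

lemma inner_pos (hf : Continuous f) (hf01 : ∀ x, f x ∈ Set.Icc (0:ℝ) 1)
    (κ a b g : ℝ) (hb : b ≠ 0) : 0 < ∫ z, itg f κ a b g z ∂stdG := by
  have hac : (volume : Measure ℝ) ≪ stdG := by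
    unfold stdG; exact gaussianReal_absolutelyContinuous' 0 one_ne_zero
  haveI : stdG.IsOpenPosMeasure := hac.isOpenPosMeasure
  rw [integral_pos_iff_support_of_nonneg (fun z => itg_nonneg hf01 κ a b g z)
    (itg_int_inner hf hf01 κ a b g)]
  set U := {z : ℝ | 0 < κ - a * g - b * z ∧ 0 < κ + a * g - b * z} with hU
  have hUopen : IsOpen U := by
    have : U = {z : ℝ | 0 < κ - a * g - b * z} ∩ {z : ℝ | 0 < κ + a * g - b * z} := rfl
    rw [this]
    exact (isOpen_lt continuous_const (by fun_prop : Continuous fun z : ℝ => κ - a * g - b * z)).inter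
      (isOpen_lt continuous_const (by fun_prop : Continuous fun z : ℝ => κ + a * g - b * z))
  have hUne : U.Nonempty := by
    refine ⟨(min (κ - a * g) (κ + a * g) - 1) / b, ?_, ?_⟩
    · have : b * ((min (κ - a * g) (κ + a * g) - 1) / b) = min (κ - a * g) (κ + a * g) - 1 :=
        mul_div_cancel₀ _ hb
      have hm : min (κ - a * g) (κ + a * g) ≤ κ - a * g := min_le_left _ _
      show 0 < κ - a * g - b * ((min (κ - a * g) (κ + a * g) - 1) / b)
      nlinarith
    · have : b * ((min (κ - a * g) (κ + a * g) - 1) / b) = min (κ - a * g) (κ + a * g) - 1 :=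
        mul_div_cancel₀ _ hb
      have hm : min (κ - a * g) (κ + a * g) ≤ κ + a * g := min_le_right _ _
      show 0 < κ + a * g - b * ((min (κ - a * g) (κ + a * g) - 1) / b)
      nlinarith
  have hsub : U ⊆ Function.support (fun z => itg f κ a b g z) := by
    intro z hz
    rcases hz with ⟨hz1, hz2⟩
    have hu : 0 < max (κ - a * g - b * z) 0 := lt_max_of_lt_left hz1
    have hv : 0 < max (κ + a * g - b * z) 0 := lt_max_of_lt_left hz2
    have h1 := (hf01 g).1; have h2 := (hf01 g).2
    have : 0 < itg f κ a b g z := by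
      unfold itg
      rcases eq_or_lt_of_le h1 with hf0 | hf0
      · rw [← hf0]; nlinarith
      · have : 0 < f g * (max (κ - a * g - b * z) 0) ^ 2 := by positivity
        nlinarith [sq_nonneg (max (κ + a * g - b * z) 0), mul_nonneg (by linarith : (0:ℝ) ≤ 1 - f g) (sq_nonneg (max (κ + a * g - b * z) 0))]
    exact this.ne'
  exact lt_of_lt_of_le (hUopen.measure_pos stdG hUne) (measure_mono hsub)

lemma II_pos (hf : Continuous f) (hf01 : ∀ x, f x ∈ Set.Icc (0:ℝ) 1)
    (κ a b : ℝ) (hb : b ≠ 0) : 0 < II f κ a b := by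
  unfold II
  rw [integral_pos_iff_support_of_nonneg (fun g => inner_nonneg hf01 κ a b g)
    (itg_int_outer hf hf01 κ a b)]
  have hsupp : Function.support (fun g => ∫ z, itg f κ a b g z ∂stdG) = Set.univ := by
    rw [Set.eq_univ_iff_forall]
    intro g
    simp only [Function.mem_support]
    exact (inner_pos hf hf01 κ a b g hb).ne'
  rw [hsupp]
  simp [measure_univ]

lemma II_even (hf : Continuous f) (κ a b : ℝ) : II f κ a (-b) = II f κ a b := by
  unfold II
  apply integral_congr_ae
  filter_upwards with g
  have step1 : ∀ z, itg f κ a (-b) g z = itg f κ a b g (-z) := by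
    intro z; unfold itg; ring_nf
  calc ∫ z, itg f κ a (-b) g z ∂stdG = ∫ z, itg f κ a b g (-z) ∂stdG := by
        exact integral_congr_ae (Eventually.of_forall step1)
    _ = ∫ z, itg f κ a b g z ∂stdG := by
        have hcont : Continuous (itg f κ a b g) := by unfold itg; fun_prop
        conv_rhs => rw [← stdG_map_neg]
        rw [integral_map measurable_neg.aemeasurable hcont.aestronglyMeasurable]

lemma Fk_even (hf : Continuous f) (κ a b : ℝ) : Fk f κ a (-b) = Fk f κ a b := by
  rw [Fk_eq_sqrt_II, Fk_eq_sqrt_II, II_even hf]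

end withf2


section endgame
variable {f : ℝ → ℝ}

lemma tendsto_slope_right {ψ : ℝ → ℝ} {x D : ℝ} (hψ : HasDerivAt ψ D x) :
    Tendsto (fun δ => (ψ (x + δ) - ψ x) / δ) (𝓝[>] (0:ℝ)) (𝓝 D) := by
  have h1 := hasDerivAt_iff_tendsto_slope.1 hψ
  have hmap : Tendsto (fun δ : ℝ => x + δ) (𝓝[>] (0:ℝ)) (𝓝[≠] x) := by
    apply tendsto_nhdsWithin_of_tendsto_nhds_of_eventually_within
    · have : Tendsto (fun δ : ℝ => x + δ) (𝓝 (0:ℝ)) (𝓝 (x + 0)) :=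
        (continuous_const.add continuous_id).tendsto 0
      rw [add_zero] at this
      exact this.mono_left nhdsWithin_le_nhds
    · filter_upwards [self_mem_nhdsWithin] with δ hδ
      exact (ne_of_gt (lt_add_of_pos_right x hδ))
  have h2 := h1.comp hmap
  refine h2.congr fun δ => ?_
  simp only [Function.comp_apply, slope_def_field]
  rw [add_sub_cancel_left]

lemma key_main (hf : Continuous f) (hf01 : ∀ x, f x ∈ Set.Icc (0:ℝ) 1)
    {κ c₁ c₂ : ℝ}
    (hφ : HasDerivAt (fun t => Fk f κ t c₂) 0 c₁) {D : ℝ}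
    (hψ : HasDerivAt (fun t => Fk f κ c₁ t) D c₂) (c : ℝ) :
    D ≤ Fk f 0 c 1 := by
  set F0 := Fk f 0 c 1 with hF0
  set L := Fk f 0 0 1 with hL
  set P := Fk f κ c₁ c₂ with hP
  set θ : ℝ → ℝ := fun r => Fk f κ (c₁ - r * c) c₂ with hθdef
  -- Step 1 : for all r > 0, D ≤ (θ r - θ 0 + r * F0) / r
  have step1 : ∀ r : ℝ, 0 < r → D ≤ (θ r - P + r * F0) / r := by
    intro r hr
    have hrne : r ≠ 0 := hr.ne'
    -- slope inequality for δ > 0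
    have stepB : ∀ δ : ℝ, 0 < δ →
        (Fk f κ c₁ (c₂ + δ) - P) / δ ≤ (θ r - P + δ * L + r * F0) / (r + δ) := by
      intro δ hδ
      have hrδ : (0:ℝ) < r + δ := by linarith
      set lam := δ / (r + δ) with hlam
      set mu := r / (r + δ) with hmu
      have hl : 0 ≤ lam := by positivity
      have hm : 0 ≤ mu := by positivity
      -- chord inequality
      have chord : Fk f κ c₁ (c₂ + δ)
          ≤ lam * Fk f κ (c₁ - r * c) (c₂ + δ) + mu * Fk f κ (c₁ + δ * c) (c₂ + δ) := by
        have e1 : κ = lam * κ + mu * κ := by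
          rw [hlam, hmu]; field_simp; ring
        have e2 : c₁ = lam * (c₁ - r * c) + mu * (c₁ + δ * c) := by
          rw [hlam, hmu]; field_simp; ring
        have e3 : c₂ + δ = lam * (c₂ + δ) + mu * (c₂ + δ) := by
          rw [hlam, hmu]; field_simp; ring
        calc Fk f κ c₁ (c₂ + δ)
            = Fk f (lam * κ + mu * κ) (lam * (c₁ - r * c) + mu * (c₁ + δ * c))
                (lam * (c₂ + δ) + mu * (c₂ + δ)) := by rw [← e1, ← e2, ← e3]
          _ ≤ Fk f (lam * κ) (lam * (c₁ - r * c)) (lam * (c₂ + δ))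
              + Fk f (mu * κ) (mu * (c₁ + δ * c)) (mu * (c₂ + δ)) :=
              Fk_subadd hf hf01 _ _ _ _ _ _
          _ = lam * Fk f κ (c₁ - r * c) (c₂ + δ) + mu * Fk f κ (c₁ + δ * c) (c₂ + δ) := by
              rw [Fk_scale hf hl, Fk_scale hf hm]
      -- translation inequalities
      have transA : Fk f κ (c₁ - r * c) (c₂ + δ) ≤ θ r + δ * L := by
        have hsub := Fk_subadd hf hf01 κ (c₁ - r * c) c₂ 0 0 δ
        have hsc : Fk f 0 0 δ = δ * L := by
          have := Fk_scale hf hδ.le 0 0 1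
          simpa using this
        simpa [hsc] using hsub
      have transB : Fk f κ (c₁ + δ * c) (c₂ + δ) ≤ P + δ * F0 := by
        have hsub := Fk_subadd hf hf01 κ c₁ c₂ 0 (δ * c) δ
        have hsc : Fk f 0 (δ * c) δ = δ * F0 := by
          have := Fk_scale hf hδ.le 0 c 1
          simpa using this
        simpa [hsc] using hsub
      -- combine
      have hcomb : Fk f κ c₁ (c₂ + δ)
          ≤ lam * (θ r + δ * L) + mu * (P + δ * F0) := by
        calc Fk f κ c₁ (c₂ + δ)
            ≤ lam * Fk f κ (c₁ - r * c) (c₂ + δ) + mu * Fk f κ (c₁ + δ * c) (c₂ + δ) := chord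
          _ ≤ lam * (θ r + δ * L) + mu * (P + δ * F0) :=
              add_le_add (mul_le_mul_of_nonneg_left transA hl)
                (mul_le_mul_of_nonneg_left transB hm)
      rw [div_le_div_iff₀ hδ hrδ]
      have hexp : (lam * (θ r + δ * L) + mu * (P + δ * F0)) * (r + δ)
          = δ * (θ r + δ * L) + r * (P + δ * F0) := by
        rw [hlam, hmu]; field_simp
      have h5 := mul_le_mul_of_nonneg_right hcomb hrδ.le
      rw [hexp] at h5
      nlinarith
    -- limit δ → 0⁺
    have hslope := tendsto_slope_right hψ
    have hR : Tendsto (fun δ : ℝ => (θ r - P + δ * L + r * F0) / (r + δ)) (𝓝[>] (0:ℝ))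
        (𝓝 ((θ r - P + r * F0) / r)) := by
      have hc : ContinuousAt (fun δ : ℝ => (θ r - P + δ * L + r * F0) / (r + δ)) 0 := by
        apply ContinuousAt.div (by fun_prop) (by fun_prop)
        simpa using hrne
      have h6 : Tendsto (fun δ : ℝ => (θ r - P + δ * L + r * F0) / (r + δ)) (𝓝[>] (0:ℝ))
          (𝓝 ((θ r - P + 0 * L + r * F0) / (r + 0))) :=
        hc.tendsto.mono_left (nhdsWithin_le_nhds (s := Ioi (0:ℝ)))
      simpa using h6
    refine le_of_tendsto_of_tendsto hslope hR ?_
    filter_upwards [self_mem_nhdsWithin] with δ hδ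
    exact stepB δ hδ
  -- Step 2 : limit r → 0⁺
  have hθ0 : θ 0 = P := by
    rw [hθdef, hP]
    norm_num
  have hθd : HasDerivAt θ 0 0 := by
    have hin : HasDerivAt (fun r : ℝ => c₁ - r * c) (-c) 0 := by
      simpa using (hasDerivAt_mul_const (x := (0:ℝ)) c).const_sub c₁
    have h0 : c₁ - 0 * c = c₁ := by ring
    have hφ' : HasDerivAt (fun t => Fk f κ t c₂) 0 (c₁ - 0 * c) := by rwa [h0]
    have := hφ'.comp 0 hin
    simpa [hθdef, Function.comp_def] using this
  have hslopeθ : Tendsto (fun r => (θ r - P) / r) (𝓝[>] (0:ℝ)) (𝓝 0) := by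
    have := tendsto_slope_right hθd
    simp only [zero_add, hθ0] at this
    exact this
  have hfinal : Tendsto (fun r => (θ r - P + r * F0) / r) (𝓝[>] (0:ℝ)) (𝓝 (0 + F0)) := by
    have : ∀ r ∈ Ioi (0:ℝ), (θ r - P) / r + F0 = (θ r - P + r * F0) / r := by
      intro r hr
      have : r ≠ 0 := (ne_of_gt hr)
      field_simp
    refine Tendsto.congr' ?_ (hslopeθ.add tendsto_const_nhds)
    filter_upwards [self_mem_nhdsWithin] with r hr
    exact this r hr
  rw [zero_add] at hfinal
  refine le_of_tendsto_of_tendsto tendsto_const_nhds hfinal ?_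
  filter_upwards [self_mem_nhdsWithin] with r hr
  exact step1 r hr

end endgame

/-- If `∂₁F_κ(c₁,c₂) = 0` at some `(c₁,c₂) ∈ ℝ × [0,∞)`, then
`∂₂F_κ(c₁,c₂) ≤ inf_{c ∈ ℝ} F₀(c,1)`. -/
theorem statement_1 (f : ℝ → ℝ) (hf : Continuous f) (hf01 : ∀ x, f x ∈ Set.Icc (0:ℝ) 1)
    (hnd : NonDeg f) (κ c₁ c₂ : ℝ) (hc₂ : 0 ≤ c₂)
    (h : d1F f κ c₁ c₂ = 0) :
    d2F f κ c₁ c₂ ≤ ⨅ c : ℝ, Fk f 0 c 1 := by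
  have hinf0 : 0 ≤ ⨅ c : ℝ, Fk f 0 c 1 := Real.iInf_nonneg (fun c => Fk_nonneg 0 c 1)
  by_cases hdiff : DifferentiableAt ℝ (fun t => Fk f κ c₁ t) c₂
  · rcases eq_or_lt_of_le hc₂ with hc0 | hc2pos
    · -- c₂ = 0 : the function is even in its last argument
      subst hc0
      have hd : HasDerivAt (fun t => Fk f κ c₁ t) (deriv (fun t => Fk f κ c₁ t) 0) 0 :=
        hdiff.hasDerivAt
      have hneg : HasDerivAt (fun t => Fk f κ c₁ (-t))
          (-(deriv (fun t => Fk f κ c₁ t) 0)) 0 := by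
        have hd' : HasDerivAt (fun t => Fk f κ c₁ t) (deriv (fun t => Fk f κ c₁ t) 0) (-0) := by
          rwa [neg_zero]
        have := hd'.comp 0 (hasDerivAt_neg (0:ℝ))
        exact this.congr_deriv (by ring)
      have heq : (fun t => Fk f κ c₁ (-t)) = fun t => Fk f κ c₁ t :=
        funext fun t => Fk_even hf κ c₁ t
      rw [heq] at hneg
      have huni : -(deriv (fun t => Fk f κ c₁ t) 0) = deriv (fun t => Fk f κ c₁ t) 0 :=
        hneg.unique hd
      have hd0 : deriv (fun t => Fk f κ c₁ t) 0 = 0 := by linarith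
      rw [d2F, hd0]
      exact hinf0
    · -- main case : c₂ > 0
      have hb : c₂ ≠ 0 := ne_of_gt hc2pos
      have hpos : 0 < II f κ c₁ c₂ := II_pos hf hf01 κ c₁ c₂ hb
      have hφd : DifferentiableAt ℝ (fun t => Fk f κ t c₂) c₁ :=
        Fk_differentiable_left hf hf01 κ c₂ c₁ hpos
      have hφ : HasDerivAt (fun t => Fk f κ t c₂) 0 c₁ := by
        have h2 := hφd.hasDerivAt
        rwa [show deriv (fun t => Fk f κ t c₂) c₁ = 0 from h] at h2
      have hψ : HasDerivAt (fun t => Fk f κ c₁ t) (d2F f κ c₁ c₂) c₂ := hdiff.hasDerivAt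
      exact le_ciInf fun c => key_main hf hf01 hφ hψ c
  · rw [d2F, deriv_zero_of_not_differentiableAt hdiff]
    exact hinf0

end MaxMargin
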